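/- Let H be a Hilbert space and (κ_ρ)_{ρ>0} a family of unitary operators on H with κ_ρ ∘ κ_σ = κ_{ρσ}. Let D ⊆ D_max ⊆ H be subspaces, both invariant under all κ_ρ, let m > 0, and let A : D_max → H be linear with A(κ_ρ u) = ρ^m κ_ρ(A u) for all ρ > 0 and u ∈ D_max; equip D_max with the graph norm ‖u‖_A = ‖u‖_H + ‖Au‖_H. For λ ∈ ℂ \ {0} such that A|_D − λ : D → H is bijective, write R(λ) = (A|_D − λ)⁻¹ : H → D ⊆ D_max. Then for every f ∈ H one has ‖κ_{|λ|^{1/m}}⁻¹ R(λ) f‖_A = ‖R(λ) f‖_H + |λ|⁻¹ ‖A R(λ) f‖_H. Consequently, for an unbounded set S ⊆ ℂ \ {0} on which A|_D − λ is bijective, one has ‖κ_{|λ|^{1/m}}⁻¹ R(λ)‖_{L(H, (D_max, ‖·‖_A))} = O(|λ|⁻¹) as |λ| → ∞ in S if and only if ‖R(λ)‖_{L(H)} = O(|λ|⁻¹) as |λ| → ∞ in S. -/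
import Mathlib


/-- Equivalence of conditions i) and ii) of Proposition 5.4: the twisted
graph-norm of the resolvent satisfies
`‖κ_{|λ|^{1/m}}⁻¹ R(λ) f‖_A = ‖R(λ) f‖ + |λ|⁻¹ ‖A R(λ) f‖`, and hence the
twisted graph-norm estimate `O(|λ|⁻¹)` is equivalent to the plain resolvent
estimate `O(|λ|⁻¹)`. -/
theorem stmt10 {H : Type*} [NormedAddCommGroup H] [InnerProductSpace ℂ H]
    [CompleteSpace H]
    (κ : ℝ → (H ≃ₗᵢ[ℂ] H))
    (hκmul : ∀ ρ : ℝ, 0 < ρ → ∀ σ : ℝ, 0 < σ → ∀ u : H, κ ρ (κ σ u) = κ (ρ * σ) u)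
    (D Dmax : Submodule ℂ H) (hDle : D ≤ Dmax)
    (hDinv : ∀ ρ : ℝ, 0 < ρ → D.map (κ ρ).toLinearEquiv.toLinearMap = D)
    (hDmaxinv : ∀ ρ : ℝ, 0 < ρ → Dmax.map (κ ρ).toLinearEquiv.toLinearMap = Dmax)
    (m : ℝ) (hm : 0 < m)
    (A : Dmax →ₗ[ℂ] H)
    (hA : ∀ ρ : ℝ, 0 < ρ → ∀ u : Dmax, ∀ h : κ ρ (u : H) ∈ Dmax,
      A ⟨κ ρ (u : H), h⟩ = (((ρ ^ m : ℝ) : ℂ)) • κ ρ (A u)) :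
    -- pointwise twisted graph-norm identity for the resolvent
    (∀ lam : ℂ, lam ≠ 0 →
      Function.Bijective
        (fun u : D => A (Submodule.inclusion hDle u) - lam • (u : H)) →
      ∀ (Rf : D) (f : H),
        A (Submodule.inclusion hDle Rf) - lam • ((Rf : D) : H) = f →
        ∀ w : Dmax, (w : H) = (κ (‖lam‖ ^ (1 / m))).symm ((Rf : D) : H) →
          ‖(w : H)‖ + ‖A w‖ =
            ‖((Rf : D) : H)‖ + ‖lam‖⁻¹ * ‖A (Submodule.inclusion hDle Rf)‖) ∧
    -- consequently, the two O(|λ|⁻¹) estimates are equivalent on unbounded sets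
    ∀ (S : Set ℂ), (∀ lam ∈ S, lam ≠ 0) → (∀ r : ℝ, ∃ lam ∈ S, r ≤ ‖lam‖) →
      ∀ (R : ℂ → H → D),
        (∀ lam ∈ S, Function.Bijective
          (fun u : D => A (Submodule.inclusion hDle u) - lam • (u : H))) →
        (∀ lam ∈ S, ∀ f : H,
          A (Submodule.inclusion hDle (R lam f)) - lam • ((R lam f : D) : H) = f) →
        ((∃ C > 0, ∃ r : ℝ, ∀ lam ∈ S, r ≤ ‖lam‖ → ∀ f : H, ∀ w : Dmax,
            (w : H) = (κ (‖lam‖ ^ (1 / m))).symm ((R lam f : D) : H) →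
            ‖(w : H)‖ + ‖A w‖ ≤ C * ‖lam‖⁻¹ * ‖f‖) ↔
          (∃ C > 0, ∃ r : ℝ, ∀ lam ∈ S, r ≤ ‖lam‖ → ∀ f : H,
            ‖((R lam f : D) : H)‖ ≤ C * ‖lam‖⁻¹ * ‖f‖)) := by
  -- basic facts about ρ = ‖lam‖ ^ (1/m)
  have hρpos : ∀ lam : ℂ, lam ≠ 0 → 0 < ‖lam‖ ^ (1 / m) := fun lam h =>
    Real.rpow_pos_of_pos (norm_pos_iff.mpr h) _
  have hρm : ∀ lam : ℂ, lam ≠ 0 → (‖lam‖ ^ (1 / m)) ^ m = ‖lam‖ := by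
    intro lam h
    rw [← Real.rpow_mul (norm_nonneg lam), one_div_mul_cancel hm.ne',
      Real.rpow_one]
  -- symm of κ preserves Dmax
  have hsymm : ∀ ρ : ℝ, 0 < ρ → ∀ x ∈ Dmax, (κ ρ).symm x ∈ Dmax := by
    intro ρ hρ x hx
    rw [← hDmaxinv ρ hρ] at hx
    obtain ⟨y, hy, hxy⟩ := hx
    have : (κ ρ).symm x = y := by
      rw [← hxy]
      exact (κ ρ).symm_apply_apply y
    rwa [this]
  -- the key pointwise identity
  have key : ∀ lam : ℂ, lam ≠ 0 →
      ∀ (Rf : D),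
        ∀ w : Dmax, (w : H) = (κ (‖lam‖ ^ (1 / m))).symm ((Rf : D) : H) →
          ‖(w : H)‖ + ‖A w‖ =
            ‖((Rf : D) : H)‖ + ‖lam‖⁻¹ * ‖A (Submodule.inclusion hDle Rf)‖ := by
    intro lam hlam Rf w hw
    set ρ := ‖lam‖ ^ (1 / m) with hρdef
    have hρ : 0 < ρ := hρpos lam hlam
    have hnorm_w : ‖(w : H)‖ = ‖((Rf : D) : H)‖ := by
      rw [hw]; exact (κ ρ).symm.norm_map _
    have hκw : κ ρ (w : H) = ((Rf : D) : H) := by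
      rw [hw]; exact (κ ρ).apply_symm_apply _
    have hmem : κ ρ (w : H) ∈ Dmax := by
      rw [hκw]; exact hDle Rf.2
    have hAeq := hA ρ hρ w hmem
    have hsub : (⟨κ ρ (w : H), hmem⟩ : Dmax) = Submodule.inclusion hDle Rf := by
      apply Subtype.ext
      simpa using hκw
    rw [hsub] at hAeq
    have hnormA : ‖A (Submodule.inclusion hDle Rf)‖ = ρ ^ m * ‖A w‖ := by
      rw [hAeq, norm_smul, Complex.norm_real, Real.norm_of_nonneg
        (Real.rpow_nonneg hρ.le m), (κ ρ).norm_map]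
    have hAw : ‖A w‖ = ‖lam‖⁻¹ * ‖A (Submodule.inclusion hDle Rf)‖ := by
      rw [hnormA, hρm lam hlam]
      exact (inv_mul_cancel_left₀ (norm_pos_iff.mpr hlam).ne' _).symm
    rw [hnorm_w, hAw]
  refine ⟨fun lam hlam _ Rf f _ w hw => key lam hlam Rf w hw, ?_⟩
  intro S hS0 _ R _ hres
  constructor
  · rintro ⟨C, hC, r, hest⟩
    refine ⟨C, hC, r, fun lam hlam hr f => ?_⟩
    have hlam0 := hS0 lam hlam
    have hmem : (κ (‖lam‖ ^ (1 / m))).symm ((R lam f : D) : H) ∈ Dmax :=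
      hsymm _ (hρpos lam hlam0) _ (hDle (R lam f).2)
    set w : Dmax := ⟨(κ (‖lam‖ ^ (1 / m))).symm ((R lam f : D) : H), hmem⟩
    have hid := key lam hlam0 (R lam f) w rfl
    have hb := hest lam hlam hr f w rfl
    rw [hid] at hb
    have : (0:ℝ) ≤ ‖lam‖⁻¹ * ‖A (Submodule.inclusion hDle (R lam f))‖ :=
      mul_nonneg (inv_nonneg.mpr (norm_nonneg _)) (norm_nonneg _)
    linarith
  · rintro ⟨C, hC, r, hest⟩
    refine ⟨2 * C + 1, by linarith, r, fun lam hlam hr f w hw => ?_⟩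
    have hlam0 := hS0 lam hlam
    have hlampos : (0:ℝ) < ‖lam‖ := norm_pos_iff.mpr hlam0
    have hid := key lam hlam0 (R lam f) w hw
    have hR := hest lam hlam hr f
    have hAR : ‖A (Submodule.inclusion hDle (R lam f))‖ ≤ ‖f‖ + ‖lam‖ * ‖((R lam f : D) : H)‖ := by
      have hre := hres lam hlam f
      have : A (Submodule.inclusion hDle (R lam f)) = f + lam • ((R lam f : D) : H) :=
        eq_add_of_sub_eq hre
      rw [this]
      calc ‖f + lam • ((R lam f : D) : H)‖ ≤ ‖f‖ + ‖lam • ((R lam f : D) : H)‖ :=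
            norm_add_le _ _
        _ = ‖f‖ + ‖lam‖ * ‖((R lam f : D) : H)‖ := by rw [norm_smul]
    rw [hid]
    have h1 : ‖lam‖⁻¹ * ‖A (Submodule.inclusion hDle (R lam f))‖ ≤
        ‖lam‖⁻¹ * (‖f‖ + ‖lam‖ * ‖((R lam f : D) : H)‖) :=
      mul_le_mul_of_nonneg_left hAR (inv_nonneg.mpr hlampos.le)
    have h2 : ‖lam‖⁻¹ * (‖f‖ + ‖lam‖ * ‖((R lam f : D) : H)‖) =
        ‖lam‖⁻¹ * ‖f‖ + ‖((R lam f : D) : H)‖ := by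
      rw [mul_add, inv_mul_cancel_left₀ hlampos.ne']
    have h3 : ‖((R lam f : D) : H)‖ ≤ C * ‖lam‖⁻¹ * ‖f‖ := hR
    nlinarith [norm_nonneg f, inv_nonneg.mpr hlampos.le]
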